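/- Let X and Y be two (ε, r₀)-Reifenberg-flat domains in ℝ^N satisfying d_H(ℝ^N∖X, ℝ^N∖Y) ≤ 4r₀. Then d_H(ℝ^N∖X, ℝ^N∖Y) ≤ (8/(1−2ε)) · (|X △ Y|/ω_N)^{1/N}, where |X △ Y| is the Lebesgue measure of the symmetric difference of X and Y and ω_N is the Lebesgue measure of the unit ball in ℝ^N. -/

import Mathlib

open Metric MeasureTheory Set Filter
open scoped ENNReal InnerProductSpace NNReal Topology

noncomputable section

/-- An `(ε, r₀)`-Reifenberg-flat domain in `ℝ^N`: a nonempty open set such that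
(i) at every boundary point and every scale `r ≤ r₀` the boundary is `ε r`-close in
Hausdorff distance to a hyperplane through the point, and (ii) at scale `r₀` the two
connected components of the complement of the `2 ε r₀`-neighborhood of the hyperplane
inside the ball lie in `Ω` and in `Ωᶜ` respectively. -/
def IsReifenbergFlat {N : ℕ} (ε r₀ : ℝ) (Ω : Set (EuclideanSpace ℝ (Fin N))) : Prop :=
  Ω.Nonempty ∧ IsOpen Ω ∧
    (∀ x ∈ frontier Ω, ∀ r : ℝ, 0 < r → r ≤ r₀ →
      ∃ ν : EuclideanSpace ℝ (Fin N), ‖ν‖ = 1 ∧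
        Metric.hausdorffDist (frontier Ω ∩ Metric.ball x r)
          ({y | ⟪ν, y - x⟫_ℝ = 0} ∩ Metric.ball x r) ≤ ε * r) ∧
    (∀ x ∈ frontier Ω,
      ∃ ν : EuclideanSpace ℝ (Fin N), ‖ν‖ = 1 ∧
        Metric.hausdorffDist (frontier Ω ∩ Metric.ball x r₀)
          ({y | ⟪ν, y - x⟫_ℝ = 0} ∩ Metric.ball x r₀) ≤ ε * r₀ ∧
        {y | 2 * ε * r₀ ≤ ⟪ν, y - x⟫_ℝ} ∩ Metric.ball x r₀ ⊆ Ω ∧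
        {y | ⟪ν, y - x⟫_ℝ ≤ -(2 * ε * r₀)} ∩ Metric.ball x r₀ ⊆ Ωᶜ)

section Auxiliary

variable {N : ℕ}

lemma crossing_frontier {α : Type*} [TopologicalSpace α] {s X : Set α} (hs : IsPreconnected s)
    (h1 : (s ∩ X).Nonempty) (h2 : (s \ X).Nonempty) : (s ∩ frontier X).Nonempty := by
  by_contra h
  rw [Set.not_nonempty_iff_eq_empty] at h
  have hfr : frontier X = closure X \ interior X := rfl
  have hsub : s ⊆ interior X ∪ interior Xᶜ := by
    intro p hp
    have hpf : p ∉ frontier X := fun hf => (Set.eq_empty_iff_forall_notMem.1 h p ⟨hp, hf⟩)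
    by_cases hpc : p ∈ closure X
    · by_cases hpi : p ∈ interior X
      · exact Or.inl hpi
      · exact absurd (hfr ▸ ⟨hpc, hpi⟩) hpf
    · right
      rw [interior_compl]
      exact hpc
  have hdisj : Disjoint (interior X) (interior Xᶜ) := by
    rw [interior_compl]
    exact disjoint_compl_right.mono_left interior_subset_closure
  rcases hs.subset_or_subset isOpen_interior isOpen_interior hdisj hsub with h' | h'
  · obtain ⟨p, hp, hpX⟩ := h2
    exact hpX (interior_subset (h' hp))
  · obtain ⟨p, hp, hpX⟩ := h1
    have := h' hp
    rw [interior_compl] at this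
    exact this (subset_closure hpX)

lemma reif_avoid {ε : ℝ} {X : Set (EuclideanSpace ℝ (Fin N))}
    {ν z : EuclideanSpace ℝ (Fin N)} {s : ℝ} (hν : ‖ν‖ = 1) (hs : 0 < s) (hz : z ∈ frontier X)
    (hH : Metric.hausdorffDist (frontier X ∩ ball z s)
      ({y | ⟪ν, y - z⟫_ℝ = 0} ∩ ball z s) ≤ ε * s)
    {y : EuclideanSpace ℝ (Fin N)} (hy : y ∈ ball z s) (hfar : ε * s < |⟪ν, y - z⟫_ℝ|) :
    y ∉ frontier X := by
  intro hyf
  have hAne : (frontier X ∩ ball z s).Nonempty := ⟨z, hz, mem_ball_self hs⟩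
  have hBne : ({y | ⟪ν, y - z⟫_ℝ = 0} ∩ ball z s).Nonempty :=
    ⟨z, by simp, mem_ball_self hs⟩
  have hfin : EMetric.hausdorffEdist (frontier X ∩ ball z s)
      ({y | ⟪ν, y - z⟫_ℝ = 0} ∩ ball z s) ≠ ⊤ :=
    Metric.hausdorffEdist_ne_top_of_nonempty_of_bounded hAne hBne
      (Metric.isBounded_ball.subset inter_subset_right)
      (Metric.isBounded_ball.subset inter_subset_right)
  have h1 : Metric.infDist y ({y | ⟪ν, y - z⟫_ℝ = 0} ∩ ball z s) ≤ ε * s :=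
    le_trans (Metric.infDist_le_hausdorffDist_of_mem (Set.mem_inter hyf hy) hfin) hH
  have h2 : Metric.infDist y ({y | ⟪ν, y - z⟫_ℝ = 0} ∩ ball z s) < |⟪ν, y - z⟫_ℝ| :=
    lt_of_le_of_lt h1 hfar
  obtain ⟨p, hpmem, hdp⟩ := (Metric.infDist_lt_iff hBne).1 h2
  have hp0 : ⟪ν, p - z⟫_ℝ = 0 := hpmem.1
  have hkey : |⟪ν, y - z⟫_ℝ| ≤ dist y p := by
    have hyp : ⟪ν, y - p⟫_ℝ = ⟪ν, y - z⟫_ℝ := by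
      have hd : y - p = (y - z) - (p - z) := by abel
      rw [hd, inner_sub_right, hp0, sub_zero]
    calc |⟪ν, y - z⟫_ℝ| = |⟪ν, y - p⟫_ℝ| := by rw [hyp]
      _ ≤ ‖ν‖ * ‖y - p‖ := abs_real_inner_le_norm ν (y - p)
      _ = dist y p := by rw [hν, one_mul, dist_eq_norm]
  linarith

lemma reif_halfspace {ε : ℝ} {X : Set (EuclideanSpace ℝ (Fin N))} (hXo : IsOpen X)
    {ν z : EuclideanSpace ℝ (Fin N)} {s : ℝ} (hν : ‖ν‖ = 1) (hs : 0 < s) (hε : 0 ≤ ε)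
    (hz : z ∈ frontier X)
    (hH : Metric.hausdorffDist (frontier X ∩ ball z s)
      ({y | ⟪ν, y - z⟫_ℝ = 0} ∩ ball z s) ≤ ε * s)
    {y₀ : EuclideanSpace ℝ (Fin N)} (hy₀T : ⟪ν, y₀ - z⟫_ℝ < -(ε * s)) (hy₀b : y₀ ∈ ball z s)
    (hy₀c : y₀ ∈ Xᶜ) :
    {y | ⟪ν, y - z⟫_ℝ < -(ε * s)} ∩ ball z s ⊆ Xᶜ := by
  intro p hp
  intro hpX
  have hconv : Convex ℝ ({y | ⟪ν, y - z⟫_ℝ < -(ε * s)} ∩ ball z s) := by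
    refine Convex.inter ?_ (convex_ball z s)
    have hset : {y : EuclideanSpace ℝ (Fin N) | ⟪ν, y - z⟫_ℝ < -(ε * s)} =
        {y | ⟪ν, y⟫_ℝ < -(ε * s) + ⟪ν, z⟫_ℝ} := by
      ext y
      simp only [Set.mem_setOf_eq, inner_sub_right]
      constructor <;> intro <;> linarith
    rw [hset]
    exact convex_halfSpace_lt
      ⟨fun a b => inner_add_right ν a b, fun c a => real_inner_smul_right ν a c⟩ _
  have hseg : segment ℝ y₀ p ⊆ {y | ⟪ν, y - z⟫_ℝ < -(ε * s)} ∩ ball z s :=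
    hconv.segment_subset ⟨hy₀T, hy₀b⟩ hp
  obtain ⟨q, hqseg, hqf⟩ := crossing_frontier (convex_segment y₀ p).isPreconnected
    ⟨p, right_mem_segment ℝ y₀ p, hpX⟩ ⟨y₀, left_mem_segment ℝ y₀ p, hy₀c⟩
  have hqT := hseg hqseg
  have habs : ε * s < |⟪ν, q - z⟫_ℝ| := by
    have : ⟪ν, q - z⟫_ℝ < -(ε * s) := hqT.1
    have h' : ε * s < -⟪ν, q - z⟫_ℝ := by linarith
    exact lt_of_lt_of_le h' (neg_le_abs _)
  exact reif_avoid hν hs hz hH hqT.2 habs hqf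

-- inner product with point of form z - a • ν
lemma inner_offset {ν z : EuclideanSpace ℝ (Fin N)} (hν : ‖ν‖ = 1) (a : ℝ) :
    ⟪ν, (z - a • ν) - z⟫_ℝ = -a := by
  have hd : (z - a • ν) - z = -(a • ν) := by abel
  rw [hd, inner_neg_right, real_inner_smul_right, real_inner_self_eq_norm_sq, hν]
  ring

lemma norm_offset {ν z : EuclideanSpace ℝ (Fin N)} (hν : ‖ν‖ = 1) (a : ℝ) :
    dist (z - a • ν) z = |a| := by
  rw [dist_eq_norm]
  have hd : (z - a • ν) - z = -(a • ν) := by abel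
  rw [hd, norm_neg, norm_smul, hν, Real.norm_eq_abs, mul_one]

lemma sep_numeric {ε s S t c W : ℝ} (hε : 0 < ε) (hε2 : ε < 1 / 2) (hs : 0 < s)
    (hS0 : 0 < S) (hSup : S ≤ s * (10 / 9)) (ht : t = 99 / 100 * s) (hc : 0 ≤ c)
    (hW2 : W ^ 2 = 2 + 2 * c) (hW : 0 < W) : ε * S < t / W * (1 + c) := by
  have hq : (t / W * (1 + c)) ^ 2 = t ^ 2 * (1 + c) ^ 2 / (2 + 2 * c) := by
    rw [mul_pow, div_pow, hW2]; ring
  have h2c : (0:ℝ) < 2 + 2 * c := by linarith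
  have htpos : 0 < t := by nlinarith
  have h1 : ε * S < 5 / 9 * s := by nlinarith
  have h2 : (ε * S) ^ 2 < (5 / 9 * s) ^ 2 := by nlinarith [mul_pos hε hS0]
  have ht2 : t ^ 2 = (99 / 100) ^ 2 * s ^ 2 := by rw [ht]; ring
  have hT2 : 2 * (ε * S) ^ 2 < t ^ 2 := by rw [ht2]; nlinarith [mul_pos hs hs]
  have hpow2 : (ε * S) ^ 2 < (t / W * (1 + c)) ^ 2 := by
    rw [hq, lt_div_iff₀ h2c]
    nlinarith [mul_pos (show (0:ℝ) < t ^ 2 - 2 * (ε * S) ^ 2 by linarith)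
        (show (0:ℝ) < 1 + c by linarith),
      mul_nonneg (sq_nonneg t) (show (0:ℝ) ≤ c + c ^ 2 by nlinarith)]
  have hpos : (0:ℝ) < t / W * (1 + c) := mul_pos (div_pos htpos hW) (by linarith)
  exact lt_of_pow_lt_pow_left₀ 2 hpos.le hpow2

lemma reif_sep {ε r₀ : ℝ} (hε : 0 < ε) (hε2 : ε < 1 / 2) (hr₀ : 0 < r₀)
    {X : Set (EuclideanSpace ℝ (Fin N))} (hX : IsReifenbergFlat ε r₀ X) :
    ∀ n : ℕ, ∀ s : ℝ, 0 < s → r₀ * (9 / 10) ^ n ≤ s → s ≤ r₀ → ∀ z ∈ frontier X,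
      ∃ ν : EuclideanSpace ℝ (Fin N), ‖ν‖ = 1 ∧
        {y | ⟪ν, y - z⟫_ℝ < -(ε * s)} ∩ ball z s ⊆ Xᶜ := by
  intro n
  induction n with
  | zero =>
    intro s hs hlow hup z hz
    have hsr : s = r₀ := le_antisymm hup (by simpa using hlow)
    subst hsr
    obtain ⟨ν, hν, hH, hplus, hminus⟩ := hX.2.2.2 z hz
    have hεs : (0:ℝ) ≤ ε := hε.le
    refine ⟨ν, hν, reif_halfspace hX.2.1 hν hs hεs hz hH
      (y₀ := z - ((1/2 + ε) * s) • ν) ?_ ?_ ?_⟩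
    · rw [inner_offset hν]
      nlinarith
    · rw [mem_ball, norm_offset hν, abs_of_pos (by nlinarith)]
      nlinarith
    · refine hminus ⟨?_, ?_⟩
      · rw [Set.mem_setOf_eq, inner_offset hν]
        nlinarith
      · rw [mem_ball, norm_offset hν, abs_of_pos (by nlinarith)]
        nlinarith
  | succ n ih =>
    intro s hs hlow hup z hz
    by_cases hcase : r₀ * (9 / 10) ^ n ≤ s
    · exact ih s hs hcase hup z hz
    push_neg at hcase
    have hpowpos : (0:ℝ) < (9/10) ^ n := pow_pos (by norm_num) n
    set S := min (s * (10 / 9)) r₀ with hSdef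
    have hS0 : 0 < S := lt_min (by linarith) hr₀
    have hSle : S ≤ r₀ := min_le_right _ _
    have hSlow : r₀ * (9 / 10) ^ n ≤ S := by
      refine le_min ?_ ?_
      · have : r₀ * (9/10) ^ (n+1) ≤ s := hlow
        rw [pow_succ] at this
        linarith
      · calc r₀ * (9/10)^n ≤ r₀ * 1 := by
              have := pow_le_one₀ (show (0:ℝ) ≤ 9/10 by norm_num) (show (9/10:ℝ) ≤ 1 by norm_num) (n := n)
              nlinarith
          _ = r₀ := mul_one r₀
    have hsS : s < S := lt_min (by linarith) (lt_of_lt_of_le hcase (by nlinarith))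
    have hSup : S ≤ s * (10/9) := min_le_left _ _
    obtain ⟨νS, hνS, hsubS⟩ := ih S hS0 hSlow hSle z hz
    obtain ⟨ν', hν', hH'⟩ := hX.2.2.1 z hz s hs hup
    obtain ⟨ν, hν, hc, hH⟩ : ∃ ν : EuclideanSpace ℝ (Fin N), ‖ν‖ = 1 ∧ 0 ≤ ⟪νS, ν⟫_ℝ ∧
        Metric.hausdorffDist (frontier X ∩ ball z s)
          ({y | ⟪ν, y - z⟫_ℝ = 0} ∩ ball z s) ≤ ε * s := by
      rcases le_or_gt 0 ⟪νS, ν'⟫_ℝ with hsgn | hsgn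
      · exact ⟨ν', hν', hsgn, hH'⟩
      · refine ⟨-ν', by rw [norm_neg]; exact hν', ?_, ?_⟩
        · rw [inner_neg_right]; linarith
        · have hset : {y : EuclideanSpace ℝ (Fin N) | ⟪-ν', y - z⟫_ℝ = 0} =
              {y | ⟪ν', y - z⟫_ℝ = 0} := by
            ext y; simp [inner_neg_left, neg_eq_zero]
          rw [hset]; exact hH'
    set c := ⟪νS, ν⟫_ℝ with hcdef
    set w := νS + ν with hwdef
    have hw2 : ‖w‖ ^ 2 = 2 + 2 * c := by
      rw [hwdef, norm_add_sq_real, hνS, hν, hcdef]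
      ring
    have hwpos : 0 < ‖w‖ := by
      rcases (norm_nonneg w).lt_or_eq with h | h
      · exact h
      · exfalso; nlinarith [hw2]
    set t := (99 / 100) * s with htdef
    have ht : 0 < t := by nlinarith
    set y₀ := z - (t / ‖w‖) • w with hy₀def
    have hinw1 : ⟪νS, w⟫_ℝ = 1 + c := by
      rw [hwdef, inner_add_right, real_inner_self_eq_norm_sq, hνS]; ring
    have hinw2 : ⟪ν, w⟫_ℝ = 1 + c := by
      rw [hwdef, inner_add_right, real_inner_self_eq_norm_sq, hν, real_inner_comm]; ring
    have hyz : y₀ - z = -((t / ‖w‖) • w) := by rw [hy₀def]; abel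
    have hnorm : dist y₀ z = t := by
      rw [dist_eq_norm, hyz, norm_neg, norm_smul, Real.norm_eq_abs,
        abs_of_pos (div_pos ht hwpos), div_mul_cancel₀ _ hwpos.ne']
    have hiS : ⟪νS, y₀ - z⟫_ℝ = -(t / ‖w‖ * (1 + c)) := by
      rw [hyz, inner_neg_right, real_inner_smul_right, hinw1]
    have hiν : ⟪ν, y₀ - z⟫_ℝ = -(t / ‖w‖ * (1 + c)) := by
      rw [hyz, inner_neg_right, real_inner_smul_right, hinw2]
    clear_value S c w t y₀
    clear hSdef hcdef hwdef hy₀def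
    have hkeyS : ε * S < t / ‖w‖ * (1 + c) :=
      sep_numeric hε hε2 hs hS0 hSup htdef hc hw2 hwpos
    have hkeys : ε * s < t / ‖w‖ * (1 + c) := lt_trans (by exact mul_lt_mul_of_pos_left hsS hε) hkeyS
    have hy₀X : y₀ ∈ Xᶜ := by
      refine hsubS ⟨?_, ?_⟩
      · rw [Set.mem_setOf_eq, hiS]; linarith
      · rw [mem_ball, hnorm]; linarith
    refine ⟨ν, hν, reif_halfspace hX.2.1 hν hs hε.le hz hH ?_ ?_ hy₀X⟩
    · rw [hiν]; linarith
    · rw [mem_ball, hnorm]; linarith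

lemma reif_ball_in_compl {ε r₀ : ℝ} (hε : 0 < ε) (hε2 : ε < 1 / 2) (hr₀ : 0 < r₀)
    {X : Set (EuclideanSpace ℝ (Fin N))} (hX : IsReifenbergFlat ε r₀ X)
    {x : EuclideanSpace ℝ (Fin N)} (hx : x ∈ Xᶜ) {r : ℝ} (hr : 0 < r) (hr4 : r ≤ 4 * r₀) :
    ∃ c : EuclideanSpace ℝ (Fin N),
      ball c ((1 - 2 * ε) * r / 8) ⊆ ball x r ∩ Xᶜ := by
  have h2ε : (0:ℝ) < 1 - 2 * ε := by linarith
  set ρ := (1 - 2 * ε) * r / 8 with hρdef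
  have hρ : 0 < ρ := by rw [hρdef]; positivity
  have hρr : ρ ≤ r := by rw [hρdef]; nlinarith
  rcases (ball x ρ ∩ X).eq_empty_or_nonempty with hemp | ⟨p, hpb, hpX⟩
  · exact ⟨x, fun u hu => ⟨ball_subset_ball hρr hu,
      fun huX => (Set.eq_empty_iff_forall_notMem.1 hemp u ⟨hu, huX⟩)⟩⟩
  · have hseg : segment ℝ x p ⊆ ball x ρ :=
      (convex_ball x ρ).segment_subset (mem_ball_self hρ) hpb
    obtain ⟨z, hzseg, hzf⟩ := crossing_frontier (convex_segment x p).isPreconnected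
      ⟨p, right_mem_segment ℝ x p, hpX⟩ ⟨x, left_mem_segment ℝ x p, hx⟩
    have hzb : z ∈ ball x ρ := hseg hzseg
    set s := r / 4 with hsdef
    have hs : 0 < s := by rw [hsdef]; positivity
    have hsr₀ : s ≤ r₀ := by rw [hsdef]; linarith
    obtain ⟨n, hn⟩ : ∃ n : ℕ, r₀ * (9 / 10) ^ n ≤ s := by
      obtain ⟨n, hn⟩ := exists_pow_lt_of_lt_one (show (0:ℝ) < s / r₀ by positivity)
        (show (9/10 : ℝ) < 1 by norm_num)
      exact ⟨n, le_of_lt (by have := (lt_div_iff₀ hr₀).1 hn; linarith)⟩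
    obtain ⟨ν, hν, hsub⟩ := reif_sep hε hε2 hr₀ hX n s hs hn hsr₀ z hzf
    set a := (1 + ε) * s / 2 with hadef
    have ha : 0 < a := by rw [hadef]; positivity
    refine ⟨z - a • ν, fun u hu => ?_⟩
    rw [mem_ball] at hu
    have hca : dist (z - a • ν) z = a := by rw [norm_offset hν, abs_of_pos ha]
    have hρs : ρ = (1 - 2 * ε) * s / 2 := by rw [hρdef, hsdef]; ring
    have hinner : ⟪ν, u - z⟫_ℝ < -(ε * s) := by
      have hdec : u - z = (u - (z - a • ν)) + ((z - a • ν) - z) := by abel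
      have h2 : ⟪ν, (z - a • ν) - z⟫_ℝ = -a := inner_offset hν a
      have h3 : ⟪ν, u - (z - a • ν)⟫_ℝ ≤ ‖u - (z - a • ν)‖ := by
        calc ⟪ν, u - (z - a • ν)⟫_ℝ ≤ ‖ν‖ * ‖u - (z - a • ν)‖ :=
              real_inner_le_norm ν _
          _ = ‖u - (z - a • ν)‖ := by rw [hν, one_mul]
      have h4 : ‖u - (z - a • ν)‖ < ρ := by rw [← dist_eq_norm]; exact hu
      rw [hdec, inner_add_right, h2]
      have : ⟪ν, u - (z - a • ν)⟫_ℝ < ρ := lt_of_le_of_lt h3 h4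
      rw [hρs] at this
      rw [hadef] at *
      nlinarith
    have hub : u ∈ ball z s := by
      rw [mem_ball]
      calc dist u z ≤ dist u (z - a • ν) + dist (z - a • ν) z := dist_triangle _ _ _
        _ < ρ + a := add_lt_add_of_lt_of_le hu hca.le
        _ < s := by rw [hρs, hadef]; nlinarith
    have hXc : u ∈ Xᶜ := hsub ⟨hinner, hub⟩
    have hxu : u ∈ ball x r := by
      rw [mem_ball]
      calc dist u x ≤ dist u z + dist z x := dist_triangle _ _ _
        _ < s + ρ := by
            have h5 : dist u z < s := hub
            have h6 : dist z x < ρ := hzb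
            linarith
        _ < r := by rw [hρs, hsdef]; nlinarith
    exact ⟨hxu, hXc⟩

end Auxiliary

/-- **Lemma (the Hausdorff distance between complements is controlled by the measure of
the symmetric difference).** Let `X`, `Y` be `(ε, r₀)`-Reifenberg-flat domains of `ℝ^N`
with `d_H(Xᶜ, Yᶜ) ≤ 4 r₀`. Then
`d_H(Xᶜ, Yᶜ) ≤ (8 / (1 - 2ε)) * (|X △ Y| / ω_N)^{1/N}`. -/
theorem hausdorff_compl_controlled_by_symmDiff {N : ℕ} {ε r₀ : ℝ}
    (hε : 0 < ε) (hε2 : ε < 1 / 2) (hr₀ : 0 < r₀)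
    {X Y : Set (EuclideanSpace ℝ (Fin N))}
    (hX : IsReifenbergFlat ε r₀ X) (hY : IsReifenbergFlat ε r₀ Y)
    (hclose : EMetric.hausdorffEdist Xᶜ Yᶜ ≤ ENNReal.ofReal (4 * r₀)) :
    EMetric.hausdorffEdist Xᶜ Yᶜ ≤
      ENNReal.ofReal (8 / (1 - 2 * ε)) *
        (volume ((X \ Y) ∪ (Y \ X)) /
            volume (Metric.ball (0 : EuclideanSpace ℝ (Fin N)) 1)) ^ (1 / (N : ℝ)) := by
  have h2ε : (0:ℝ) < 1 - 2 * ε := by linarith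
  by_cases hD0 : EMetric.hausdorffEdist Xᶜ Yᶜ = 0
  · rw [hD0]; exact zero_le
  rcases Nat.eq_zero_or_pos N with rfl | hN
  · exfalso
    haveI : Subsingleton (EuclideanSpace ℝ (Fin 0)) := inferInstance
    have hXu : X = Set.univ := hX.1.eq_univ
    have hYu : Y = Set.univ := hY.1.eq_univ
    rw [hXu, hYu] at hD0
    exact hD0 (by rw [Set.compl_univ]; exact EMetric.hausdorffEdist_self)
  have hDtop : EMetric.hausdorffEdist Xᶜ Yᶜ ≠ ⊤ :=
    (lt_of_le_of_lt hclose ENNReal.ofReal_lt_top).ne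
  set D := EMetric.hausdorffEdist Xᶜ Yᶜ with hDdef
  set m := volume ((X \ Y) ∪ (Y \ X)) with hmdef
  set ω := volume (Metric.ball (0 : EuclideanSpace ℝ (Fin N)) 1) with hωdef
  set R := (m / ω) ^ (1 / (N : ℝ)) with hRdef
  have hω0 : ω ≠ 0 := (measure_ball_pos volume 0 one_pos).ne'
  have hωtop : ω ≠ ⊤ := measure_ball_lt_top.ne
  haveI : Nonempty (Fin N) := ⟨⟨0, hN⟩⟩
  have claim : ∀ ρ : ℝ, 0 < ρ → ENNReal.ofReal (8 * ρ / (1 - 2 * ε)) < D →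
      ENNReal.ofReal ρ ≤ R := by
    intro ρ hρ hlt
    set r := 8 * ρ / (1 - 2 * ε) with hrdef
    have hrpos : 0 < r := by rw [hrdef]; positivity
    have hρr : ρ = (1 - 2 * ε) * r / 8 := by rw [hrdef]; field_simp
    have hr4 : r ≤ 4 * r₀ := by
      have h1 : ENNReal.ofReal r < ENNReal.ofReal (4 * r₀) := lt_of_lt_of_le hlt hclose
      exact le_of_lt ((ENNReal.ofReal_lt_ofReal_iff (by positivity)).1 h1)
    have hnotle : ¬ D ≤ ENNReal.ofReal r := not_le.2 hlt
    have hEx : ∃ c : EuclideanSpace ℝ (Fin N), ball c ρ ⊆ (X \ Y) ∪ (Y \ X) := by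
      by_cases hall : ∀ u ∈ Xᶜ, EMetric.infEdist u Yᶜ ≤ ENNReal.ofReal r
      · have hEx2 : ∃ v ∈ Yᶜ, ¬ EMetric.infEdist v Xᶜ ≤ ENNReal.ofReal r := by
          by_contra hall2
          push_neg at hall2
          exact hnotle (EMetric.hausdorffEdist_le_of_infEdist hall hall2)
        obtain ⟨v, hv, hinf⟩ := hEx2
        have hball : ball v r ⊆ X := by
          intro u hu
          by_contra huX
          exact hinf (le_of_lt (lt_of_le_of_lt (EMetric.infEdist_le_edist_of_mem huX)
            (edist_lt_ofReal.2 (mem_ball'.1 hu))))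
        obtain ⟨c, hc⟩ := reif_ball_in_compl hε hε2 hr₀ hY hv hrpos hr4
        refine ⟨c, fun u hu => ?_⟩
        rw [← hρr] at hc
        exact Or.inl ⟨hball (hc hu).1, (hc hu).2⟩
      · push_neg at hall
        obtain ⟨v, hv, hinf⟩ := hall
        have hinf' : ¬ EMetric.infEdist v Yᶜ ≤ ENNReal.ofReal r := not_le.2 hinf
        have hball : ball v r ⊆ Y := by
          intro u hu
          by_contra huY
          exact hinf' (le_of_lt (lt_of_le_of_lt (EMetric.infEdist_le_edist_of_mem huY)
            (edist_lt_ofReal.2 (mem_ball'.1 hu))))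
        obtain ⟨c, hc⟩ := reif_ball_in_compl hε hε2 hr₀ hX hv hrpos hr4
        refine ⟨c, fun u hu => ?_⟩
        rw [← hρr] at hc
        exact Or.inr ⟨hball (hc hu).1, (hc hu).2⟩
    obtain ⟨c, hc⟩ := hEx
    have hvol : (ENNReal.ofReal ρ) ^ N * ω ≤ m := by
      have hb : volume (ball c ρ) ≤ m := le_trans (measure_mono hc) (le_of_eq hmdef.symm)
      have h1 : volume (ball c ρ) = (ENNReal.ofReal ρ) ^ N *
          ENNReal.ofReal (Real.sqrt Real.pi ^ N / Real.Gamma (N / 2 + 1)) := by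
        rw [EuclideanSpace.volume_ball (Fin N) c ρ, Fintype.card_fin]
      have h2 : ω = (ENNReal.ofReal (1:ℝ)) ^ N *
          ENNReal.ofReal (Real.sqrt Real.pi ^ N / Real.Gamma (N / 2 + 1)) := by
        rw [hωdef, EuclideanSpace.volume_ball (Fin N) 0 1, Fintype.card_fin]
      rw [h2, ENNReal.ofReal_one, one_pow, one_mul, ← h1]
      exact hb
    have hle : (ENNReal.ofReal ρ) ^ N ≤ m / ω :=
      (ENNReal.le_div_iff_mul_le (Or.inl hω0) (Or.inl hωtop)).2 hvol
    calc ENNReal.ofReal ρ = ((ENNReal.ofReal ρ) ^ ((N : ℝ))) ^ (1 / (N : ℝ)) := by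
          rw [← ENNReal.rpow_mul, mul_one_div_cancel (by exact_mod_cast hN.ne' : (N:ℝ) ≠ 0),
            ENNReal.rpow_one]
      _ ≤ R := by
          rw [hRdef]
          exact ENNReal.rpow_le_rpow (by rwa [ENNReal.rpow_natCast]) (by positivity)
  have hdR : 0 < D.toReal := ENNReal.toReal_pos hD0 hDtop
  set a := (1 - 2 * ε) * D.toReal / 8 with hadef
  have ha : 0 < a := by rw [hadef]; positivity
  have hfin : ENNReal.ofReal a ≤ R := by
    by_contra hcon
    push_neg at hcon
    have hRtop : R ≠ ⊤ := hcon.ne_top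
    have hb : R.toReal < a := (ENNReal.lt_ofReal_iff_toReal_lt hRtop).1 hcon
    set ρ := (max R.toReal 0 + a) / 2 with hρdef
    have hmax0 : (0:ℝ) ≤ max R.toReal 0 := le_max_right _ _
    have hρpos : 0 < ρ := by rw [hρdef]; linarith
    have hρa : ρ < a := by
      have : max R.toReal 0 < a := max_lt hb ha
      rw [hρdef]; linarith
    have hρR : R.toReal < ρ := by
      have : R.toReal ≤ max R.toReal 0 := le_max_left _ _
      rw [hρdef]; linarith
    have hlt : ENNReal.ofReal (8 * ρ / (1 - 2 * ε)) < D := by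
      rw [ENNReal.ofReal_lt_iff_lt_toReal (by positivity) hDtop]
      rw [hadef] at hρa
      rw [div_lt_iff₀ h2ε]
      nlinarith
    have happ := claim ρ hρpos hlt
    have : ρ ≤ R.toReal := (ENNReal.ofReal_le_iff_le_toReal hRtop).1 happ
    linarith
  calc D = ENNReal.ofReal D.toReal := (ENNReal.ofReal_toReal hDtop).symm
    _ = ENNReal.ofReal (8 / (1 - 2 * ε) * a) := by
        congr 1
        rw [hadef]
        field_simp
    _ = ENNReal.ofReal (8 / (1 - 2 * ε)) * ENNReal.ofReal a :=
        ENNReal.ofReal_mul (by positivity)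
    _ ≤ ENNReal.ofReal (8 / (1 - 2 * ε)) * R := mul_le_mul_right hfin _
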